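/- Let R₁ > 0 and let μ be a Borel probability measure on ℝ^d supported in the closed ball B̄(R₁). Then for every z ∈ ℝ^d the map z ↦ γ(z, μ) is Fréchet differentiable at z, and its derivative applied to a direction h ∈ ℝ^d equals D_zγ(z, μ)(h) = (∫∫ ⟨h, y₁ − y₂⟩ · y₁ · exp(⟨z, y₁⟩ + ⟨z, y₂⟩) dμ(y₁) dμ(y₂)) / γ₂(z, μ)². -/

import Mathlib

open MeasureTheory
open scoped RealInnerProductSpace

set_option maxHeartbeats 1000000
set_option synthInstance.maxHeartbeats 400000

/-- The normalisation constant `γ₂(z, μ) = ∫ exp⟨z,y⟩ dμ(y)`. -/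
noncomputable def gamma2 {d : ℕ} (z : EuclideanSpace ℝ (Fin d))
    (μ : Measure (EuclideanSpace ℝ (Fin d))) : ℝ :=
  ∫ y, Real.exp ⟪z, y⟫ ∂μ

/-- The attention map `γ(z, μ) = (∫ exp⟨z,y⟩ • y dμ(y)) / γ₂(z, μ)`. -/
noncomputable def gammaAttn {d : ℕ} (z : EuclideanSpace ℝ (Fin d))
    (μ : Measure (EuclideanSpace ℝ (Fin d))) : EuclideanSpace ℝ (Fin d) :=
  (gamma2 z μ)⁻¹ • ∫ y, Real.exp ⟪z, y⟫ • y ∂μ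

private lemma integrable_of_bdd {d : ℕ} {V : Type*} [NormedAddCommGroup V]
    {μ : Measure (EuclideanSpace ℝ (Fin d))} [IsProbabilityMeasure μ]
    {R₁ : ℝ} (hae : ∀ᵐ y ∂μ, ‖y‖ ≤ R₁) {f : EuclideanSpace ℝ (Fin d) → V}
    (hf : AEStronglyMeasurable f μ) {C : ℝ}
    (hC : ∀ y, ‖y‖ ≤ R₁ → ‖f y‖ ≤ C) : Integrable f μ :=
  (integrable_const C).mono' hf (hae.mono fun y hy => hC y hy)

private lemma inner_hasFDerivAt {d : ℕ} (x y : EuclideanSpace ℝ (Fin d)) :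
    HasFDerivAt (fun w : EuclideanSpace ℝ (Fin d) => ⟪w, y⟫) (innerSL ℝ y) x := by
  have := (innerSL ℝ y).hasFDerivAt (x := x)
  have heq : (fun w : EuclideanSpace ℝ (Fin d) => ⟪w, y⟫) = fun w => (innerSL ℝ y) w := by
    funext w; exact real_inner_comm _ _
  rw [heq]; exact this

theorem stmt_3 {d : ℕ} (R₁ : ℝ) (hR₁ : 0 < R₁)
    (μ : Measure (EuclideanSpace ℝ (Fin d))) [IsProbabilityMeasure μ]
    (hsupp : μ (Metric.closedBall 0 R₁) = 1)
    (z : EuclideanSpace ℝ (Fin d)) :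
    DifferentiableAt ℝ (fun w => gammaAttn w μ) z ∧
      ∀ h : EuclideanSpace ℝ (Fin d),
        fderiv ℝ (fun w => gammaAttn w μ) z h =
          ((gamma2 z μ) ^ 2)⁻¹ •
            ∫ y₁, ∫ y₂, (⟪h, y₁ - y₂⟫ * Real.exp (⟪z, y₁⟫ + ⟪z, y₂⟫)) • y₁ ∂μ ∂μ := by
  classical
  -- a.e. bound on the norm
  have hae : ∀ᵐ y ∂μ, ‖y‖ ≤ R₁ := by
    have h : ∀ᵐ y ∂μ, y ∈ Metric.closedBall (0 : EuclideanSpace ℝ (Fin d)) R₁ :=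
      (mem_ae_iff_prob_eq_one measurableSet_closedBall).mpr hsupp
    filter_upwards [h] with y hy
    simpa [Metric.mem_closedBall, dist_zero_right] using hy
  set C : ℝ := Real.exp ((‖z‖ + 1) * R₁) with hCdef
  have hCpos : (0 : ℝ) < C := Real.exp_pos _
  -- exponential bound on the unit ball around z
  have hexp_bound : ∀ x : EuclideanSpace ℝ (Fin d), x ∈ Metric.ball z 1 →
      ∀ y : EuclideanSpace ℝ (Fin d), ‖y‖ ≤ R₁ → Real.exp ⟪x, y⟫ ≤ C := by
    intro x hx y hy
    have h1 : ‖x - z‖ < 1 := by simpa [dist_eq_norm] using hx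
    have hxn : ‖x‖ ≤ ‖z‖ + 1 := by
      have : x = (x - z) + z := by abel
      calc ‖x‖ = ‖(x - z) + z‖ := by rw [← this]
        _ ≤ ‖x - z‖ + ‖z‖ := norm_add_le _ _
        _ ≤ ‖z‖ + 1 := by linarith
    have hinner : ⟪x, y⟫ ≤ (‖z‖ + 1) * R₁ := by
      calc ⟪x, y⟫ ≤ ‖x‖ * ‖y‖ := real_inner_le_norm _ _
        _ ≤ (‖z‖ + 1) * R₁ := by
          apply mul_le_mul hxn hy (norm_nonneg _) (by positivity)
    exact Real.exp_le_exp.mpr hinner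
  have hzball : z ∈ Metric.ball z 1 := Metric.mem_ball_self one_pos
  -- continuity / measurability facts
  have hcont1 : ∀ x : EuclideanSpace ℝ (Fin d),
      Continuous (fun y : EuclideanSpace ℝ (Fin d) => Real.exp ⟪x, y⟫) := fun x =>
    Real.continuous_exp.comp (continuous_const.inner continuous_id)
  have hcont2 : ∀ x : EuclideanSpace ℝ (Fin d),
      Continuous (fun y : EuclideanSpace ℝ (Fin d) => Real.exp ⟪x, y⟫ • y) := fun x =>
    (hcont1 x).smul continuous_id
  have hcontD' : Continuous (fun y : EuclideanSpace ℝ (Fin d) =>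
      Real.exp ⟪z, y⟫ • innerSL ℝ y) := (hcont1 z).smul (innerSL ℝ).continuous
  have hcontN' : Continuous (fun y : EuclideanSpace ℝ (Fin d) =>
      (Real.exp ⟪z, y⟫ • innerSL ℝ y).smulRight y) :=
    ((ContinuousLinearMap.smulRightL ℝ (EuclideanSpace ℝ (Fin d))
      (EuclideanSpace ℝ (Fin d))).continuous₂).comp (hcontD'.prodMk continuous_id)
  -- integrability facts
  have hint1 : Integrable (fun y => Real.exp ⟪z, y⟫) μ :=
    integrable_of_bdd hae (hcont1 z).aestronglyMeasurable
      (fun y hy => by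
        rw [Real.norm_eq_abs, abs_of_pos (Real.exp_pos _)]
        exact hexp_bound z hzball y hy)
  have hint2 : Integrable (fun y => Real.exp ⟪z, y⟫ • y) μ :=
    integrable_of_bdd hae (hcont2 z).aestronglyMeasurable (C := C * R₁)
      (fun y hy => by
        rw [norm_smul, Real.norm_eq_abs, abs_of_pos (Real.exp_pos _)]
        exact mul_le_mul (hexp_bound z hzball y hy) hy (norm_nonneg _) hCpos.le)
  have hintD' : Integrable (fun y => Real.exp ⟪z, y⟫ • innerSL ℝ y) μ :=
    integrable_of_bdd hae hcontD'.aestronglyMeasurable (C := C * R₁)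
      (fun y hy => by
        rw [norm_smul (Real.exp ⟪z, y⟫) (innerSL ℝ y), Real.norm_eq_abs,
          abs_of_pos (Real.exp_pos _), innerSL_apply_norm]
        exact mul_le_mul (hexp_bound z hzball y hy) hy (norm_nonneg _) hCpos.le)
  have hintN' : Integrable (fun y => (Real.exp ⟪z, y⟫ • innerSL ℝ y).smulRight y) μ :=
    integrable_of_bdd hae hcontN'.aestronglyMeasurable (C := C * R₁ * R₁)
      (fun y hy => by
        rw [ContinuousLinearMap.norm_smulRight_apply, norm_smul (Real.exp ⟪z, y⟫) (innerSL ℝ y),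
          Real.norm_eq_abs, abs_of_pos (Real.exp_pos _), innerSL_apply_norm]
        have h1 : Real.exp ⟪z, y⟫ * ‖y‖ ≤ C * R₁ :=
          mul_le_mul (hexp_bound z hzball y hy) hy (norm_nonneg _) hCpos.le
        exact mul_le_mul h1 hy (norm_nonneg _) (by positivity))
  -- pointwise derivative
  have hderiv : ∀ (x y : EuclideanSpace ℝ (Fin d)),
      HasFDerivAt (fun w : EuclideanSpace ℝ (Fin d) => Real.exp ⟪w, y⟫ • y)
        ((Real.exp ⟪x, y⟫ • innerSL ℝ y).smulRight y) x := fun x y =>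
    ((inner_hasFDerivAt x y).exp).smul_const y
  have hderivS : ∀ (x y : EuclideanSpace ℝ (Fin d)),
      HasFDerivAt (fun w : EuclideanSpace ℝ (Fin d) => Real.exp ⟪w, y⟫)
        (Real.exp ⟪x, y⟫ • innerSL ℝ y) x := fun x y => (inner_hasFDerivAt x y).exp
  -- differentiation under the integral sign: numerator
  set N' : EuclideanSpace ℝ (Fin d) →L[ℝ] EuclideanSpace ℝ (Fin d) :=
    ∫ y, (Real.exp ⟪z, y⟫ • innerSL ℝ y).smulRight y ∂μ with hN'def
  have hN : HasFDerivAt (fun w => ∫ y, Real.exp ⟪w, y⟫ • y ∂μ) N' z := by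
    apply hasFDerivAt_integral_of_dominated_of_fderiv_le (bound := fun _ => C * R₁ * R₁)
      (F := fun (x y : EuclideanSpace ℝ (Fin d)) => Real.exp ⟪x, y⟫ • y)
      (F' := fun (x y : EuclideanSpace ℝ (Fin d)) => (Real.exp ⟪x, y⟫ • innerSL ℝ y).smulRight y)
      (s := Metric.ball z 1) (Metric.ball_mem_nhds z one_pos)
    · exact Filter.Eventually.of_forall fun x => (hcont2 x).aestronglyMeasurable
    · exact hint2
    · exact hcontN'.aestronglyMeasurable
    · filter_upwards [hae] with y hy x hx
      rw [ContinuousLinearMap.norm_smulRight_apply, norm_smul (Real.exp ⟪x, y⟫) (innerSL ℝ y),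
        Real.norm_eq_abs, abs_of_pos (Real.exp_pos _), innerSL_apply_norm]
      have h1 : Real.exp ⟪x, y⟫ * ‖y‖ ≤ C * R₁ :=
        mul_le_mul (hexp_bound x hx y hy) hy (norm_nonneg _) hCpos.le
      exact mul_le_mul h1 hy (norm_nonneg _) (by positivity)
    · exact integrable_const _
    · exact Filter.Eventually.of_forall fun y x _ => hderiv x y
  -- differentiation under the integral sign: denominator
  set D' : EuclideanSpace ℝ (Fin d) →L[ℝ] ℝ :=
    ∫ y, Real.exp ⟪z, y⟫ • innerSL ℝ y ∂μ with hD'def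
  have hD : HasFDerivAt (fun w => gamma2 w μ) D' z := by
    simp only [gamma2]
    apply hasFDerivAt_integral_of_dominated_of_fderiv_le (bound := fun _ => C * R₁)
      (F := fun (x y : EuclideanSpace ℝ (Fin d)) => Real.exp ⟪x, y⟫)
      (F' := fun (x y : EuclideanSpace ℝ (Fin d)) => Real.exp ⟪x, y⟫ • innerSL ℝ y)
      (s := Metric.ball z 1) (Metric.ball_mem_nhds z one_pos)
    · exact Filter.Eventually.of_forall fun x => (hcont1 x).aestronglyMeasurable
    · exact hint1
    · exact hcontD'.aestronglyMeasurable
    · filter_upwards [hae] with y hy x hx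
      rw [norm_smul (Real.exp ⟪x, y⟫) (innerSL ℝ y), Real.norm_eq_abs,
        abs_of_pos (Real.exp_pos _), innerSL_apply_norm]
      exact mul_le_mul (hexp_bound x hx y hy) hy (norm_nonneg _) hCpos.le
    · exact integrable_const _
    · exact Filter.Eventually.of_forall fun y x _ => hderivS x y
  -- positivity of the denominator
  have hDz : 0 < gamma2 z μ := by
    have hlow : Real.exp (-(‖z‖ * R₁)) ≤ gamma2 z μ := by
      rw [gamma2]
      have : ∫ _y : EuclideanSpace ℝ (Fin d), Real.exp (-(‖z‖ * R₁)) ∂μ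
          = Real.exp (-(‖z‖ * R₁)) := by simp
      rw [← this]
      apply integral_mono_ae (integrable_const _) hint1
      filter_upwards [hae] with y hy
      apply Real.exp_le_exp.mpr
      have h1 : |⟪z, y⟫| ≤ ‖z‖ * ‖y‖ := abs_real_inner_le_norm _ _
      have h2 : ‖z‖ * ‖y‖ ≤ ‖z‖ * R₁ := by
        apply mul_le_mul_of_nonneg_left hy (norm_nonneg _)
      linarith [neg_abs_le ⟪z, y⟫]
    exact lt_of_lt_of_le (Real.exp_pos _) hlow
  -- derivative of the full map
  have hInv : HasFDerivAt (fun w => (gamma2 w μ)⁻¹)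
      ((-((gamma2 z μ) ^ 2)⁻¹ : ℝ) • D') z :=
    (hasDerivAt_inv hDz.ne').comp_hasFDerivAt z hD
  have hG : HasFDerivAt (fun w => gammaAttn w μ)
      ((gamma2 z μ)⁻¹ • N' +
        ((-((gamma2 z μ) ^ 2)⁻¹ : ℝ) • D').smulRight (∫ y, Real.exp ⟪z, y⟫ • y ∂μ)) z := by
    have := hInv.smul hN
    exact this
  refine ⟨hG.differentiableAt, fun h => ?_⟩
  rw [hG.fderiv]
  -- notation
  set Dz : ℝ := gamma2 z μ with hDzdef
  set Nz : EuclideanSpace ℝ (Fin d) := ∫ y, Real.exp ⟪z, y⟫ • y ∂μ with hNzdef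
  set Ih : ℝ := ∫ y, Real.exp ⟪z, y⟫ * ⟪y, h⟫ ∂μ with hIhdef
  set Vh : EuclideanSpace ℝ (Fin d) := ∫ y, (Real.exp ⟪z, y⟫ * ⟪y, h⟫) • y ∂μ with hVhdef
  -- more integrability
  have hintIh : Integrable (fun y => Real.exp ⟪z, y⟫ * ⟪y, h⟫) μ :=
    integrable_of_bdd hae
      (((hcont1 z).mul (continuous_id.inner continuous_const)).aestronglyMeasurable)
      (C := C * (R₁ * ‖h‖))
      (fun y hy => by
        rw [Real.norm_eq_abs, abs_mul, abs_of_pos (Real.exp_pos _)]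
        have h1 : |⟪y, h⟫| ≤ R₁ * ‖h‖ := by
          calc |⟪y, h⟫| ≤ ‖y‖ * ‖h‖ := abs_real_inner_le_norm _ _
            _ ≤ R₁ * ‖h‖ := mul_le_mul_of_nonneg_right hy (norm_nonneg _)
        exact mul_le_mul (hexp_bound z hzball y hy) h1 (abs_nonneg _) hCpos.le)
  have hintVh : Integrable (fun y => (Real.exp ⟪z, y⟫ * ⟪y, h⟫) • y) μ :=
    integrable_of_bdd hae
      ((((hcont1 z).mul (continuous_id.inner continuous_const)).smul
        continuous_id).aestronglyMeasurable)
      (C := C * (R₁ * ‖h‖) * R₁)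
      (fun y hy => by
        rw [norm_smul, Real.norm_eq_abs, abs_mul, abs_of_pos (Real.exp_pos _)]
        have h1 : |⟪y, h⟫| ≤ R₁ * ‖h‖ := by
          calc |⟪y, h⟫| ≤ ‖y‖ * ‖h‖ := abs_real_inner_le_norm _ _
            _ ≤ R₁ * ‖h‖ := mul_le_mul_of_nonneg_right hy (norm_nonneg _)
        have h2 : Real.exp ⟪z, y⟫ * |⟪y, h⟫| ≤ C * (R₁ * ‖h‖) :=
          mul_le_mul (hexp_bound z hzball y hy) h1 (abs_nonneg _) hCpos.le
        exact mul_le_mul h2 hy (norm_nonneg _) (by positivity))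
  -- evaluate the derivative at h
  have hN'h : N' h = Vh := by
    rw [hN'def, ContinuousLinearMap.integral_apply hintN', hVhdef]
    simp only [ContinuousLinearMap.smulRight_apply, ContinuousLinearMap.smul_apply,
      innerSL_apply_apply, smul_eq_mul, smul_smul]
  have hD'h : D' h = Ih := by
    rw [hD'def, ContinuousLinearMap.integral_apply hintD', hIhdef]
    simp only [ContinuousLinearMap.smul_apply, innerSL_apply_apply, smul_eq_mul]
  -- compute the double integral
  have hinner_int : ∀ y₁ : EuclideanSpace ℝ (Fin d),
      (∫ y₂, (⟪h, y₁ - y₂⟫ * Real.exp (⟪z, y₁⟫ + ⟪z, y₂⟫)) • y₁ ∂μ)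
        = ((⟪h, y₁⟫ * Dz - Ih) * Real.exp ⟪z, y₁⟫) • y₁ := by
    intro y₁
    rw [integral_smul_const]
    congr 1
    have heq : (fun y₂ : EuclideanSpace ℝ (Fin d) =>
        ⟪h, y₁ - y₂⟫ * Real.exp (⟪z, y₁⟫ + ⟪z, y₂⟫))
        = fun y₂ => Real.exp ⟪z, y₁⟫ * (⟪h, y₁⟫ * Real.exp ⟪z, y₂⟫)
          - Real.exp ⟪z, y₁⟫ * (Real.exp ⟪z, y₂⟫ * ⟪y₂, h⟫) := by
      funext y₂
      rw [inner_sub_right, Real.exp_add, real_inner_comm h y₂]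
      ring
    rw [heq, integral_sub ((hint1.const_mul _).const_mul _) (hintIh.const_mul _),
      integral_const_mul, integral_const_mul, integral_const_mul, ← hIhdef]
    have hg : (∫ y, Real.exp ⟪z, y⟫ ∂μ) = Dz := rfl
    rw [hg]
    ring
  have houter : (∫ y₁, ∫ y₂, (⟪h, y₁ - y₂⟫ * Real.exp (⟪z, y₁⟫ + ⟪z, y₂⟫)) • y₁ ∂μ ∂μ)
      = Dz • Vh - Ih • Nz := by
    rw [integral_congr_ae (Filter.Eventually.of_forall hinner_int)]
    have heq : (fun y₁ : EuclideanSpace ℝ (Fin d) =>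
        ((⟪h, y₁⟫ * Dz - Ih) * Real.exp ⟪z, y₁⟫) • y₁)
        = fun y₁ => Dz • ((Real.exp ⟪z, y₁⟫ * ⟪y₁, h⟫) • y₁) - Ih • (Real.exp ⟪z, y₁⟫ • y₁) := by
      funext y₁
      rw [smul_smul, smul_smul, ← sub_smul, real_inner_comm h y₁]
      congr 1
      ring
    have hi1 : Integrable (fun y₁ : EuclideanSpace ℝ (Fin d) =>
        Dz • ((Real.exp ⟪z, y₁⟫ * ⟪y₁, h⟫) • y₁)) μ := hintVh.smul Dz
    have hi2 : Integrable (fun y₁ : EuclideanSpace ℝ (Fin d) =>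
        Ih • (Real.exp ⟪z, y₁⟫ • y₁)) μ := hint2.smul Ih
    rw [heq, integral_sub hi1 hi2, integral_smul, integral_smul, ← hVhdef, ← hNzdef]
  rw [houter]
  -- final linear algebra
  simp only [ContinuousLinearMap.add_apply, ContinuousLinearMap.smul_apply,
    ContinuousLinearMap.smulRight_apply, hN'h, hD'h]
  rw [smul_sub, smul_smul, smul_smul]
  have h1 : (Dz ^ 2)⁻¹ * Dz = Dz⁻¹ := by
    field_simp
  rw [h1, sub_eq_add_neg, ← neg_smul, smul_eq_mul, neg_mul]
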